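/- Let p ≥ 1 be an integer and let R₁,…,R_p be independent integrable real-valued random variables, each with the same mean m and with variance Var(Rᵢ) ≤ v for some v ≥ 0. Then E[max_{1≤i≤p} Rᵢ] ≤ m + √(v·(p − 1)). -/

import Mathlib

open MeasureTheory ProbabilityTheory

/-- Samuelson's inequality (pointwise): every value is at most the mean plus
`√((p-1)/p)` times the root of the sum of squares. -/
lemma samuelson_pointwise {p : ℕ} (hp : 1 ≤ p) (d : Fin p → ℝ) (i : Fin p) :
    d i ≤ (∑ j, d j) / p + Real.sqrt (((p : ℝ) - 1) / p * ∑ j, (d j) ^ 2) := by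
  have hp0 : (0 : ℝ) < p := by positivity
  set a : ℝ := (∑ j, d j) / p with ha
  set e : Fin p → ℝ := fun j => d j - a with he
  have hsum : ∑ j, e j = 0 := by
    simp only [he, Finset.sum_sub_distrib, Finset.sum_const, Finset.card_univ,
      Fintype.card_fin, nsmul_eq_mul, ha]
    field_simp
    ring
  have h1 : e i = -∑ j ∈ Finset.univ.erase i, e j := by
    have := Finset.add_sum_erase Finset.univ e (Finset.mem_univ i)
    linarith [this.trans hsum]
  have hcard : ((Finset.univ.erase i).card : ℝ) = (p : ℝ) - 1 := by
    rw [Finset.card_erase_of_mem (Finset.mem_univ i)]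
    simp [Nat.cast_sub hp]
  have hcs : (∑ j ∈ Finset.univ.erase i, e j) ^ 2
      ≤ ((p : ℝ) - 1) * ∑ j ∈ Finset.univ.erase i, (e j) ^ 2 := by
    have := sq_sum_le_card_mul_sum_sq (s := Finset.univ.erase i) (f := e)
    calc (∑ j ∈ Finset.univ.erase i, e j) ^ 2
        ≤ ((Finset.univ.erase i).card : ℝ) * ∑ j ∈ Finset.univ.erase i, (e j) ^ 2 := this
      _ = ((p : ℝ) - 1) * ∑ j ∈ Finset.univ.erase i, (e j) ^ 2 := by rw [hcard]
  have h2 : ∑ j ∈ Finset.univ.erase i, (e j) ^ 2 = (∑ j, (e j) ^ 2) - (e i) ^ 2 := by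
    rw [Finset.sum_erase_eq_sub (Finset.mem_univ i)]
  have hkey : (p : ℝ) * (e i) ^ 2 ≤ ((p : ℝ) - 1) * ∑ j, (e j) ^ 2 := by
    have h3 : (e i) ^ 2 ≤ ((p : ℝ) - 1) * ((∑ j, (e j) ^ 2) - (e i) ^ 2) := by
      rw [← h2, h1, neg_sq]; exact hcs
    nlinarith [sq_nonneg (e i)]
  have hee : ∑ j, (e j) ^ 2 ≤ ∑ j, (d j) ^ 2 := by
    have hexp : ∑ j, (e j) ^ 2 = (∑ j, (d j) ^ 2) - (p : ℝ) * a ^ 2 := by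
      have : ∀ j, (e j) ^ 2 = (d j) ^ 2 - 2 * a * d j + a ^ 2 := by
        intro j; simp only [he]; ring
      rw [Finset.sum_congr rfl (fun j _ => this j)]
      simp only [Finset.sum_add_distrib, Finset.sum_sub_distrib, ← Finset.mul_sum,
        Finset.sum_const, Finset.card_univ, Fintype.card_fin, nsmul_eq_mul]
      have hda : ∑ j, d j = (p : ℝ) * a := by rw [ha]; field_simp
      rw [hda]; ring
    nlinarith [sq_nonneg a]
  have hei : e i ≤ Real.sqrt (((p : ℝ) - 1) / p * ∑ j, (d j) ^ 2) := by
    have h4 : (e i) ^ 2 ≤ ((p : ℝ) - 1) / p * ∑ j, (d j) ^ 2 := by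
      rw [div_mul_eq_mul_div, le_div_iff₀ hp0]
      have h5 : ((p : ℝ) - 1) * ∑ j, (e j) ^ 2 ≤ ((p : ℝ) - 1) * ∑ j, (d j) ^ 2 := by
        apply mul_le_mul_of_nonneg_left hee
        have : (1 : ℝ) ≤ p := by exact_mod_cast hp
        linarith
      calc (e i) ^ 2 * p = (p : ℝ) * (e i) ^ 2 := by ring
        _ ≤ ((p : ℝ) - 1) * ∑ j, (e j) ^ 2 := hkey
        _ ≤ _ := h5
    calc e i ≤ |e i| := le_abs_self _
      _ = Real.sqrt ((e i) ^ 2) := (Real.sqrt_sq_eq_abs _).symm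
      _ ≤ _ := Real.sqrt_le_sqrt h4
  have : d i = a + e i := by simp [he]
  rw [this]
  exact (add_le_add_iff_left _).mpr hei

/-- Jensen's inequality for the square root on a probability measure. -/
lemma integral_sqrt_le {Ω : Type*} [MeasureSpace Ω] [IsProbabilityMeasure (ℙ : Measure Ω)]
    {f : Ω → ℝ} (hf : Integrable f) (hf0 : ∀ ω, 0 ≤ f ω) :
    ∫ ω, Real.sqrt (f ω) ∂(ℙ : Measure Ω) ≤ Real.sqrt (∫ ω, f ω ∂(ℙ : Measure Ω)) := by
  have hA : 0 ≤ ∫ ω, f ω ∂(ℙ : Measure Ω) := integral_nonneg hf0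
  have hsqint : Integrable (fun ω => Real.sqrt (f ω)) := by
    have hd : Integrable (fun ω => f ω + 1) := hf.add (integrable_const 1)
    refine hd.mono' (Real.continuous_sqrt.comp_aestronglyMeasurable hf.1) ?_
    filter_upwards with ω
    rw [Real.norm_eq_abs, abs_of_nonneg (Real.sqrt_nonneg _)]
    nlinarith [sq_nonneg (Real.sqrt (f ω) - 1), Real.sq_sqrt (hf0 ω),
      Real.sqrt_nonneg (f ω)]
  -- AM-GM: √x ≤ t/2 + x/(2t) for t > 0
  have key : ∀ t : ℝ, 0 < t →
      ∫ ω, Real.sqrt (f ω) ∂(ℙ : Measure Ω) ≤ t / 2 + (∫ ω, f ω ∂(ℙ : Measure Ω)) / (2 * t) := by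
    intro t ht
    have hb : ∀ ω, Real.sqrt (f ω) ≤ t / 2 + f ω / (2 * t) := by
      intro ω
      have h := Real.sq_sqrt (hf0 ω)
      have heq : t / 2 + f ω / (2 * t) = (t * t + f ω) / (2 * t) := by field_simp
      rw [heq, le_div_iff₀ (by positivity)]
      nlinarith [sq_nonneg (Real.sqrt (f ω) - t), Real.sqrt_nonneg (f ω)]
    calc ∫ ω, Real.sqrt (f ω) ∂(ℙ : Measure Ω)
        ≤ ∫ ω, (t / 2 + f ω / (2 * t)) ∂(ℙ : Measure Ω) := by
          refine integral_mono hsqint ?_ hb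
          exact (integrable_const _).add (hf.div_const _)
      _ = t / 2 + (∫ ω, f ω ∂(ℙ : Measure Ω)) / (2 * t) := by
          rw [integral_add (integrable_const _) (hf.div_const _), integral_const,
            integral_div]
          simp
  rcases eq_or_lt_of_le hA with hA0 | hApos
  · rw [← hA0, Real.sqrt_zero]
    refine le_of_forall_pos_le_add ?_
    intro ε hε
    have := key (2 * ε) (by positivity)
    have h0 : (∫ ω, f ω ∂(ℙ : Measure Ω)) / (2 * (2 * ε)) = 0 := by rw [← hA0]; simp
    linarith
  · have := key (Real.sqrt (∫ ω, f ω ∂(ℙ : Measure Ω)))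
      (Real.sqrt_pos.mpr hApos)
    have hs : Real.sqrt (∫ ω, f ω ∂(ℙ : Measure Ω)) > 0 := Real.sqrt_pos.mpr hApos
    have hsq : Real.sqrt (∫ ω, f ω ∂(ℙ : Measure Ω)) * Real.sqrt (∫ ω, f ω ∂(ℙ : Measure Ω))
        = ∫ ω, f ω ∂(ℙ : Measure Ω) := Real.mul_self_sqrt hA
    calc ∫ ω, Real.sqrt (f ω) ∂(ℙ : Measure Ω)
        ≤ Real.sqrt (∫ ω, f ω ∂(ℙ : Measure Ω)) / 2
          + (∫ ω, f ω ∂(ℙ : Measure Ω)) / (2 * Real.sqrt (∫ ω, f ω ∂(ℙ : Measure Ω))) :=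
          this
      _ = Real.sqrt (∫ ω, f ω ∂(ℙ : Measure Ω)) := by
          have h6 : (∫ ω, f ω ∂(ℙ : Measure Ω)) / (2 * Real.sqrt (∫ ω, f ω ∂(ℙ : Measure Ω)))
              = Real.sqrt (∫ ω, f ω ∂(ℙ : Measure Ω)) / 2 := by
            rw [div_eq_iff (ne_of_gt (by linarith))]; linear_combination -hsq
          rw [h6]; ring

/-- Eqn. (23) of the paper (Arnold–Groeneveld): bound on the expectation of the
highest order statistic of `p` independent real random variables with common mean `m`
and variance bound `v`. -/
theorem expected_max_order_statistic_bound {Ω : Type*} [MeasureSpace Ω]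
    [IsProbabilityMeasure (ℙ : Measure Ω)] {p : ℕ} (hp : 1 ≤ p)
    (R : Fin p → Ω → ℝ) (hmeas : ∀ i, Measurable (R i))
    (hindep : iIndepFun R ℙ)
    (hint : ∀ i, Integrable (R i)) {m : ℝ} (hm : ∀ i, ∫ ω, R i ω ∂(ℙ : MeasureTheory.Measure Ω) = m)
    {v : ℝ} (hv : 0 ≤ v) (hint2 : ∀ i, Integrable (fun ω => (R i ω - m) ^ 2))
    (hvar : ∀ i, ∫ ω, (R i ω - m) ^ 2 ∂(ℙ : MeasureTheory.Measure Ω) ≤ v) :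
    ∫ ω, (⨆ i, R i ω) ∂(ℙ : MeasureTheory.Measure Ω) ≤ m + Real.sqrt (v * ((p : ℝ) - 1)) := by
  have hp0 : (0 : ℝ) < p := by positivity
  haveI : NeZero p := ⟨Nat.one_le_iff_ne_zero.mp hp⟩
  -- the quadratic part
  set Q : Ω → ℝ := fun ω => ((p : ℝ) - 1) / p * ∑ j, (R j ω - m) ^ 2 with hQ
  have hQ0 : ∀ ω, 0 ≤ Q ω := by
    intro ω
    apply mul_nonneg
    · apply div_nonneg _ hp0.le
      have : (1 : ℝ) ≤ p := by exact_mod_cast hp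
      linarith
    · exact Finset.sum_nonneg fun j _ => sq_nonneg _
  have hQint : Integrable Q := by
    apply Integrable.const_mul
    exact integrable_finset_sum _ fun j _ => hint2 j
  -- the bounding function
  have hsum_int : Integrable fun ω => ∑ j, (R j ω - m) :=
    integrable_finset_sum _ fun j _ => (hint j).sub (integrable_const m)
  have h1int : Integrable (fun ω => m + (∑ j, (R j ω - m)) / (p : ℝ)) :=
    (integrable_const m).add (hsum_int.div_const _)
  have hsqint : Integrable (fun ω => Real.sqrt (Q ω)) := by
    have hd : Integrable (fun ω => Q ω + 1) := hQint.add (integrable_const 1)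
    refine hd.mono' (Real.continuous_sqrt.comp_aestronglyMeasurable hQint.1) ?_
    filter_upwards with ω
    rw [Real.norm_eq_abs, abs_of_nonneg (Real.sqrt_nonneg _)]
    nlinarith [sq_nonneg (Real.sqrt (Q ω) - 1), Real.sq_sqrt (hQ0 ω),
      Real.sqrt_nonneg (Q ω)]
  set g : Ω → ℝ := fun ω => m + (∑ j, (R j ω - m)) / p + Real.sqrt (Q ω) with hg
  have hgint : Integrable g := h1int.add hsqint
  -- pointwise bound on the supremum
  have hpt : ∀ ω, (⨆ i, R i ω) ≤ g ω := by
    intro ω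
    refine ciSup_le fun i => ?_
    have := samuelson_pointwise hp (fun j => R j ω - m) i
    simp only [hg, hQ]
    linarith [this]
  -- integrability of the sup
  have hMmeas : Measurable fun ω => ⨆ i, R i ω := by
    have h1 : Measurable (Finset.univ.sup' (Finset.univ_nonempty (α := Fin p)) R) :=
      Finset.measurable_sup' _ fun i _ => hmeas i
    have h2 : (fun ω => ⨆ i, R i ω)
        = Finset.univ.sup' (Finset.univ_nonempty (α := Fin p)) R := by
      funext ω
      rw [← Finset.sup'_univ_eq_ciSup, Finset.sup'_apply]
    rw [h2]; exact h1
  have hMint : Integrable fun ω => ⨆ i, R i ω := by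
    refine Integrable.mono' (g := fun ω => ∑ j, |R j ω|)
      (integrable_finset_sum _ fun j _ => (hint j).abs) hMmeas.aestronglyMeasurable ?_
    filter_upwards with ω
    rw [Real.norm_eq_abs, abs_le]
    constructor
    · have h1 : -(∑ j, |R j ω|) ≤ R ⟨0, hp⟩ ω := by
        have h2 : |R ⟨0, hp⟩ ω| ≤ ∑ j, |R j ω| :=
          Finset.single_le_sum (fun j _ => abs_nonneg (R j ω)) (Finset.mem_univ _)
        linarith [neg_abs_le (R ⟨0, hp⟩ ω)]
      refine h1.trans ?_
      exact le_ciSup (f := fun i => R i ω) (Set.Finite.bddAbove (Set.finite_range _))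
        (⟨0, hp⟩ : Fin p)
    · refine ciSup_le fun i => ?_
      calc R i ω ≤ |R i ω| := le_abs_self _
        _ ≤ ∑ j, |R j ω| :=
          Finset.single_le_sum (fun j _ => abs_nonneg (R j ω)) (Finset.mem_univ _)
  -- main chain
  have step1 : ∫ ω, (⨆ i, R i ω) ∂(ℙ : Measure Ω) ≤ ∫ ω, g ω ∂(ℙ : Measure Ω) :=
    integral_mono hMint hgint hpt
  have step2 : ∫ ω, g ω ∂(ℙ : Measure Ω)
      = m + ∫ ω, Real.sqrt (Q ω) ∂(ℙ : Measure Ω) := by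
    have e1 : ∫ ω, g ω ∂(ℙ : Measure Ω)
        = (∫ ω, (m + (∑ j, (R j ω - m)) / (p : ℝ)) ∂(ℙ : Measure Ω))
          + ∫ ω, Real.sqrt (Q ω) ∂(ℙ : Measure Ω) :=
      integral_add h1int hsqint
    have e2 : ∫ ω, (m + (∑ j, (R j ω - m)) / (p : ℝ)) ∂(ℙ : Measure Ω)
        = (∫ ω, (m : ℝ) ∂(ℙ : Measure Ω))
          + ∫ ω, (∑ j, (R j ω - m)) / (p : ℝ) ∂(ℙ : Measure Ω) :=
      integral_add (integrable_const m) (hsum_int.div_const _)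
    have hij : ∀ j : Fin p, Integrable (fun ω => R j ω - m) :=
      fun j => (hint j).sub (integrable_const m)
    have hzero : ∫ ω, (∑ j, (R j ω - m)) / (p : ℝ) ∂(ℙ : Measure Ω) = 0 := by
      rw [integral_div, integral_finset_sum _ fun j _ => hij j]
      have hz : ∀ j : Fin p, ∫ ω, (R j ω - m) ∂(ℙ : Measure Ω) = 0 := by
        intro j
        rw [integral_sub (hint j) (integrable_const m), integral_const, hm j]
        simp
      simp [hz]
    rw [e1, e2, hzero, integral_const]
    simp
  have step3 : ∫ ω, Real.sqrt (Q ω) ∂(ℙ : Measure Ω) ≤ Real.sqrt (v * ((p : ℝ) - 1)) := by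
    refine (integral_sqrt_le hQint hQ0).trans ?_
    apply Real.sqrt_le_sqrt
    have hIQ : ∫ ω, Q ω ∂(ℙ : Measure Ω)
        = ((p : ℝ) - 1) / p * ∑ j, ∫ ω, (R j ω - m) ^ 2 ∂(ℙ : Measure Ω) := by
      rw [hQ]
      simp only
      rw [integral_const_mul, integral_finset_sum _ fun j _ => hint2 j]
    rw [hIQ]
    have hsb : ∑ j : Fin p, ∫ ω, (R j ω - m) ^ 2 ∂(ℙ : Measure Ω) ≤ (p : ℝ) * v := by
      calc ∑ j : Fin p, ∫ ω, (R j ω - m) ^ 2 ∂(ℙ : Measure Ω)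
          ≤ ∑ _j : Fin p, v := Finset.sum_le_sum fun j _ => hvar j
        _ = (p : ℝ) * v := by simp [mul_comm]
    have hc : (0 : ℝ) ≤ ((p : ℝ) - 1) / p := by
      apply div_nonneg _ hp0.le
      have : (1 : ℝ) ≤ p := by exact_mod_cast hp
      linarith
    calc ((p : ℝ) - 1) / p * ∑ j, ∫ ω, (R j ω - m) ^ 2 ∂(ℙ : Measure Ω)
        ≤ ((p : ℝ) - 1) / p * ((p : ℝ) * v) := mul_le_mul_of_nonneg_left hsb hc
      _ = v * ((p : ℝ) - 1) := by field_simp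
  calc ∫ ω, (⨆ i, R i ω) ∂(ℙ : Measure Ω) ≤ ∫ ω, g ω ∂(ℙ : Measure Ω) := step1
    _ = m + ∫ ω, Real.sqrt (Q ω) ∂(ℙ : Measure Ω) := step2
    _ ≤ m + Real.sqrt (v * ((p : ℝ) - 1)) := (add_le_add_iff_left _).mpr step3
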